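/- arXiv:2201.06041 — 3 statements merged into one kernel-verified Lean document; each statement's English description precedes it below -/
import Mathlib

section
/- Let n ≥ 1, let A, B ∈ ℂ^{n×n}, let γ > 0 be real, and let α, β ∈ (−π, π) be real numbers with 0 < β − α ≤ π. Assume: (i) either ‖A‖ ≤ γ, or W(A) lies in the angular sector [α, β]; (ii) ‖B‖ < 1/γ; and (iii) there exist real numbers c ≤ d with d − c < π, −π − α < c, and d < π − β, such that W(B) lies in the angular sector [c, d]. Then the matrix I + A·B is invertible. -/
open scoped ComplexOrder Matrix

noncomputable section

/-- The numerical range `W(A)` of a complex `n × n` matrix. -/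
def numRange {n : ℕ} (A : Matrix (Fin n) (Fin n) ℂ) : Set ℂ :=
  { z | ∃ x : EuclideanSpace ℂ (Fin n), ‖x‖ = 1 ∧
      z = (inner ℂ x (Matrix.toEuclideanLin A x) : ℂ) }

/-- The operator norm (largest singular value) of a complex matrix. -/
def opNorm {n : ℕ} (A : Matrix (Fin n) (Fin n) ℂ) : ℝ :=
  ‖Matrix.toEuclideanCLM (𝕜 := ℂ) A‖

/-- A set `S ⊆ ℂ` lies in the angular sector `[a, b]`. -/
def inSector (a b : ℝ) (S : Set ℂ) : Prop :=
  ∀ z ∈ S, ∃ ρ θ : ℝ, 0 < ρ ∧ a ≤ θ ∧ θ ≤ b ∧ z = ρ * Complex.exp (θ * Complex.I)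

/-- Mixed small-gain/small-phase matrix invertibility (paper's Lemma 3). -/
theorem mixed_gain_phase_matrix_invertible {n : ℕ} (hn : 1 ≤ n)
    (A B : Matrix (Fin n) (Fin n) ℂ) (γ : ℝ) (hγ : 0 < γ)
    (α β : ℝ) (hα : -Real.pi < α) (hα' : α < Real.pi) (hβ : -Real.pi < β) (hβ' : β < Real.pi)
    (hαβ : 0 < β - α) (hαβ' : β - α ≤ Real.pi)
    (hA : opNorm A ≤ γ ∨ inSector α β (numRange A))
    (hBgain : opNorm B < 1 / γ)
    (hBphase : ∃ c d : ℝ, c ≤ d ∧ d - c < Real.pi ∧ -Real.pi - α < c ∧ d < Real.pi - β ∧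
      inSector c d (numRange B)) :
    IsUnit (1 + A * B) := by
  by_contra hcon
  rw [Matrix.isUnit_iff_isUnit_det, isUnit_iff_ne_zero, ne_eq, not_not] at hcon
  obtain ⟨v, hv0, hv⟩ := Matrix.exists_mulVec_eq_zero_iff.mpr hcon
  set x : EuclideanSpace ℂ (Fin n) := (WithLp.equiv 2 (Fin n → ℂ)).symm v with hxdef
  have hx0 : x ≠ 0 := by
    intro h
    exact hv0 (by simpa [hxdef] using congrArg (WithLp.equiv 2 (Fin n → ℂ)) h)
  set y : EuclideanSpace ℂ (Fin n) := Matrix.toEuclideanLin B x with hydef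
  have h1 : A *ᵥ (B *ᵥ v) = -v := by
    have h := hv
    rw [Matrix.add_mulVec, Matrix.one_mulVec, ← Matrix.mulVec_mulVec] at h
    exact eq_neg_of_add_eq_zero_right h
  have hAy : Matrix.toEuclideanLin A y = -x := by
    have h2 : Matrix.toEuclideanLin A y =
        (WithLp.equiv 2 (Fin n → ℂ)).symm (A *ᵥ (B *ᵥ v)) := rfl
    rw [h2, h1]
    rfl
  have hxnorm : (0:ℝ) < ‖x‖ := norm_pos_iff.mpr hx0
  have hy0 : y ≠ 0 := by
    intro h
    rw [h, map_zero] at hAy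
    exact hx0 (by simpa using hAy.symm)
  have hynorm : (0:ℝ) < ‖y‖ := norm_pos_iff.mpr hy0
  have hyB : ‖y‖ ≤ opNorm B * ‖x‖ := (Matrix.toEuclideanCLM (𝕜 := ℂ) B).le_opNorm x
  obtain ⟨c, d, hcd, hdc, hc, hd, hsB⟩ := hBphase
  rcases hA with hAgain | hAsect
  · -- small gain case
    have hxA : ‖x‖ ≤ opNorm A * ‖y‖ := by
      have := (Matrix.toEuclideanCLM (𝕜 := ℂ) A).le_opNorm y
      rw [show Matrix.toEuclideanCLM (𝕜 := ℂ) A y = Matrix.toEuclideanLin A y from rfl,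
        hAy, norm_neg] at this
      exact this
    have h3 : opNorm A * ‖y‖ ≤ γ * (opNorm B * ‖x‖) := by
      have hopA : (0:ℝ) ≤ opNorm A := norm_nonneg _
      calc opNorm A * ‖y‖ ≤ γ * ‖y‖ := mul_le_mul_of_nonneg_right hAgain (norm_nonneg _)
        _ ≤ γ * (opNorm B * ‖x‖) := mul_le_mul_of_nonneg_left hyB hγ.le
    have h4 : γ * (opNorm B * ‖x‖) < γ * ((1/γ) * ‖x‖) :=
      mul_lt_mul_of_pos_left (mul_lt_mul_of_pos_right hBgain hxnorm) hγ
    have h5 : γ * ((1/γ) * ‖x‖) = ‖x‖ := by field_simp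
    linarith
  · -- phase case
    set p : ℂ := inner ℂ y x with hpdef
    -- unit vector for A
    have hw : ‖((‖y‖⁻¹:ℝ):ℂ) • y‖ = 1 := by
      rw [norm_smul, Complex.norm_real, Real.norm_eq_abs, abs_inv, abs_norm]
      exact inv_mul_cancel₀ (ne_of_gt hynorm)
    have hzA : (inner ℂ (((‖y‖⁻¹:ℝ):ℂ) • y)
        (Matrix.toEuclideanLin A (((‖y‖⁻¹:ℝ):ℂ) • y)) : ℂ)
          = ((‖y‖⁻¹:ℝ):ℂ)^2 * (-p) := by
      rw [map_smul, hAy, inner_smul_left, inner_smul_right, inner_neg_right,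
        Complex.conj_ofReal, hpdef]
      ring
    obtain ⟨ρ, θ, hρ, hθ1, hθ2, hEA⟩ :=
      hAsect _ ⟨((‖y‖⁻¹:ℝ):ℂ) • y, hw, rfl⟩
    rw [hzA] at hEA
    -- unit vector for B
    have hu : ‖((‖x‖⁻¹:ℝ):ℂ) • x‖ = 1 := by
      rw [norm_smul, Complex.norm_real, Real.norm_eq_abs, abs_inv, abs_norm]
      exact inv_mul_cancel₀ (ne_of_gt hxnorm)
    have hzB : (inner ℂ (((‖x‖⁻¹:ℝ):ℂ) • x)
        (Matrix.toEuclideanLin B (((‖x‖⁻¹:ℝ):ℂ) • x)) : ℂ)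
          = ((‖x‖⁻¹:ℝ):ℂ)^2 * (inner ℂ x y : ℂ) := by
      rw [map_smul, ← hydef, inner_smul_left, inner_smul_right, Complex.conj_ofReal]
      ring
    obtain ⟨σ, φ, hσ, hφ1, hφ2, hEB⟩ :=
      hsB _ ⟨((‖x‖⁻¹:ℝ):ℂ) • x, hu, rfl⟩
    rw [hzB] at hEB
    -- clear the inverse factors
    have hxne : ((‖x‖:ℝ):ℂ) ≠ 0 := by
      simpa using (ne_of_gt hxnorm)
    have hyne : ((‖y‖:ℝ):ℂ) ≠ 0 := by
      simpa using (ne_of_gt hynorm)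
    have hby : ((‖y‖⁻¹:ℝ):ℂ)^2 * ((‖y‖:ℝ):ℂ)^2 = 1 := by
      push_cast
      field_simp
    have hbx : ((‖x‖⁻¹:ℝ):ℂ)^2 * ((‖x‖:ℝ):ℂ)^2 = 1 := by
      push_cast
      field_simp
    have hEA' : (ρ:ℂ) * ((‖y‖:ℝ):ℂ)^2 * Complex.exp ((θ:ℂ) * Complex.I) = -p := by
      linear_combination (-(((‖y‖:ℝ):ℂ)^2)) * hEA - p * hby
    -- conjugate the B equation
    have hconjE : (starRingEnd ℂ) (Complex.exp ((φ:ℂ) * Complex.I))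
        = Complex.exp (-((φ:ℂ) * Complex.I)) := by
      rw [← Complex.exp_conj, map_mul, Complex.conj_ofReal, Complex.conj_I, mul_neg]
    have hEBc := congrArg (starRingEnd ℂ) hEB
    simp only [map_mul, map_pow, Complex.conj_ofReal, inner_conj_symm, hconjE] at hEBc
    -- hEBc : ((‖x‖⁻¹:ℝ):ℂ)^2 * p = σ * exp(-(φ I))
    have hEC : (σ:ℂ) * ((‖x‖:ℝ):ℂ)^2 * Complex.exp (-((φ:ℂ) * Complex.I)) = p := by
      rw [← hpdef] at hEBc
      linear_combination (-(((‖x‖:ℝ):ℂ)^2)) * hEBc + p * hbx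
    -- combine
    have hmul : Complex.exp ((θ:ℂ) * Complex.I) * Complex.exp ((φ:ℂ) * Complex.I)
        = Complex.exp (((θ + φ : ℝ):ℂ) * Complex.I) := by
      rw [← Complex.exp_add]
      push_cast
      ring_nf
    have hmul2 : Complex.exp (-((φ:ℂ) * Complex.I)) * Complex.exp ((φ:ℂ) * Complex.I) = 1 := by
      rw [← Complex.exp_add]
      simp
    have hE : ((ρ:ℂ) * ((‖y‖:ℝ):ℂ)^2) * Complex.exp (((θ + φ : ℝ):ℂ) * Complex.I)
        = -((σ:ℂ) * ((‖x‖:ℝ):ℂ)^2) := by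
      rw [← hmul]
      linear_combination Complex.exp ((φ:ℂ) * Complex.I) * hEA'
        + Complex.exp ((φ:ℂ) * Complex.I) * hEC
        - ((σ:ℂ) * ((‖x‖:ℝ):ℂ)^2) * hmul2
    -- take absolute values
    have habs0 : ‖Complex.exp (((θ:ℂ) + (φ:ℂ)) * Complex.I)‖ = 1 := by
      rw [show ((θ:ℂ) + (φ:ℂ)) = ((θ + φ : ℝ):ℂ) by push_cast; ring]
      exact Complex.norm_exp_ofReal_mul_I _
    have habs : ρ * ‖y‖^2 = σ * ‖x‖^2 := by
      have h6 := congrArg (‖·‖) hE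
      simpa [map_mul, map_pow, norm_neg, Complex.norm_real, habs0,
        Complex.norm_exp_ofReal_mul_I, abs_of_pos hρ, abs_of_pos hσ,
        abs_of_pos hxnorm, abs_of_pos hynorm] using h6
    have hRpos : (0:ℝ) < ρ * ‖y‖^2 := by positivity
    have hE1 : Complex.exp (((θ + φ : ℝ):ℂ) * Complex.I) = -1 := by
      have hRne : ((ρ:ℂ) * ((‖y‖:ℝ):ℂ)^2) ≠ 0 := by
        apply mul_ne_zero
        · exact_mod_cast (ne_of_gt hρ)
        · exact pow_ne_zero _ hyne
      have hSR : ((σ:ℂ) * ((‖x‖:ℝ):ℂ)^2) = ((ρ:ℂ) * ((‖y‖:ℝ):ℂ)^2) := by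
        exact_mod_cast habs.symm
      have h7 : ((ρ:ℂ) * ((‖y‖:ℝ):ℂ)^2) * Complex.exp (((θ + φ : ℝ):ℂ) * Complex.I)
          = ((ρ:ℂ) * ((‖y‖:ℝ):ℂ)^2) * (-1) := by
        rw [hE, hSR]; ring
      exact mul_left_cancel₀ hRne h7
    -- extract the angle equation
    have hE2 : Complex.exp (((θ + φ - Real.pi : ℝ):ℂ) * Complex.I) = 1 := by
      have hsplit : ((θ + φ - Real.pi : ℝ):ℂ) * Complex.I
          = ((θ + φ : ℝ):ℂ) * Complex.I + -(Real.pi * Complex.I) := by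
        push_cast
        ring
      rw [hsplit, Complex.exp_add, hE1, Complex.exp_neg, Complex.exp_pi_mul_I]
      norm_num
    obtain ⟨k, hk⟩ := Complex.exp_eq_one_iff.mp hE2
    have hk' : (θ + φ - Real.pi : ℝ) = 2 * Real.pi * (k:ℝ) := by
      have hkk : ((θ + φ - Real.pi : ℝ):ℂ) * Complex.I
          = ((2 * Real.pi * (k:ℝ) : ℝ):ℂ) * Complex.I := by
        rw [hk]
        push_cast
        ring
      have := mul_right_cancel₀ Complex.I_ne_zero hkk
      exact_mod_cast this
    -- finish with the angle bounds
    rcases le_or_gt 0 k with hk0 | hk0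
    · have hkr : (0:ℝ) ≤ (k:ℝ) := by exact_mod_cast hk0
      have h8 : 0 ≤ 2 * Real.pi * (k:ℝ) :=
        mul_nonneg (by positivity) hkr
      linarith
    · have hkr : (k:ℝ) ≤ -1 := by exact_mod_cast Int.le_sub_one_of_lt hk0
      have h8 : 2 * Real.pi * (k:ℝ) ≤ 2 * Real.pi * (-1) :=
        mul_le_mul_of_nonneg_left hkr (by positivity)
      linarith
end
end

section
/- Let n ≥ 1 and A, B ∈ ℂ^{n×n}, with B sectorial (0 ∉ W(B)). Suppose there exist a real number r ≥ 0 and real numbers a ≤ b with b − a ≤ π and c ≤ d with d − c < π such that: (i) W_{≥r}(A) lies in the angular sector [a, b]; (ii) W(B) lies in the angular sector [c, d]; (iii) b + d < π and a + c > −π; and (iv) ‖B‖ · r < 1. Then the matrix I + A·B is invertible. -/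
open scoped ComplexOrder Matrix

noncomputable section

/-- The vertically projected Davis–Wielandt shell `W_{≥r}(A)`. -/
def wShell {n : ℕ} (A : Matrix (Fin n) (Fin n) ℂ) (r : ℝ) : Set ℂ :=
  { z | ∃ x : EuclideanSpace ℂ (Fin n), ‖x‖ = 1 ∧ r ≤ ‖Matrix.toEuclideanLin A x‖ ∧
      z = (inner ℂ x (Matrix.toEuclideanLin A x) : ℂ) }

/-- Paper's Theorem 4: mixed constrained-phase / gain invertibility via the
Davis–Wielandt shell. -/
theorem dw_mixed_invertible {n : ℕ} (hn : 1 ≤ n)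
    (A B : Matrix (Fin n) (Fin n) ℂ) (hBsect : (0 : ℂ) ∉ numRange B)
    (r : ℝ) (hr : 0 ≤ r) (a b : ℝ) (hab : a ≤ b) (hab' : b - a ≤ Real.pi)
    (c d : ℝ) (hcd : c ≤ d) (hcd' : d - c < Real.pi)
    (hA : inSector a b (wShell A r))
    (hB : inSector c d (numRange B))
    (hbd : b + d < Real.pi) (hac : -Real.pi < a + c)
    (hgain : opNorm B * r < 1) :
    IsUnit (1 + A * B) := by
  rw [← Matrix.mulVec_injective_iff_isUnit]
  have key : ∀ x : EuclideanSpace ℂ (Fin n),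
      Matrix.toEuclideanLin (1 + A * B) x = 0 → x = 0 := by
    intro x hx
    by_contra hx0
    have hxn : (0:ℝ) < ‖x‖ := norm_pos_iff.mpr hx0
    set TB := Matrix.toEuclideanLin B with hTBdef
    set TA := Matrix.toEuclideanLin A with hTAdef
    have hmul : Matrix.toEuclideanLin (1 + A * B) x = x + TA (TB x) := by
      apply (WithLp.equiv 2 _).injective
      simp [Matrix.piLp_ofLp_toEuclideanLin, Matrix.toLin'_mul, Matrix.add_mulVec,
        Matrix.mulVec_mulVec, hTAdef, hTBdef]
    rw [hmul] at hx
    set y := TB x with hy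
    have hTAy : TA y = -x := by
      have := hx; linear_combination (norm := module) this
    have hyne : y ≠ 0 := by
      intro h
      rw [h, map_zero] at hTAy
      exact hx0 (by simpa using hTAy.symm)
    have hyn : (0:ℝ) < ‖y‖ := norm_pos_iff.mpr hyne
    -- B part: v = normalized x
    set v : EuclideanSpace ℂ (Fin n) := ((‖x‖⁻¹ : ℝ) : ℂ) • x with hv
    have hvn : ‖v‖ = 1 := by
      simp [hv, norm_smul, inv_mul_cancel₀ hxn.ne']
    have hzB : (inner ℂ v (TB v) : ℂ) = ((‖x‖⁻¹ : ℝ) : ℂ)^2 * inner ℂ x y := by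
      simp only [hv, inner_smul_left, inner_smul_right, Complex.conj_ofReal, map_smul, ← hy]
      ring
    obtain ⟨ρ₂, φ, hρ₂, hφ1, hφ2, hwφ⟩ :=
      hB _ (show _ ∈ numRange B from ⟨v, hvn, rfl⟩)
    -- A part: u = normalized y
    set u : EuclideanSpace ℂ (Fin n) := ((‖y‖⁻¹ : ℝ) : ℂ) • y with hu
    have hun : ‖u‖ = 1 := by
      simp [hu, norm_smul, inv_mul_cancel₀ hyn.ne']
    have hTAu : TA u = ((‖y‖⁻¹ : ℝ) : ℂ) • (-x) := by
      rw [hu, map_smul, hTAy]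
    have hnormTAu : ‖TA u‖ = ‖y‖⁻¹ * ‖x‖ := by
      rw [hTAu]; simp [norm_smul, abs_of_nonneg (inv_nonneg.mpr hyn.le)]
    have hbound : ‖y‖ ≤ opNorm B * ‖x‖ := by
      rw [hy, hTBdef, ← Matrix.coe_toEuclideanCLM_eq_toEuclideanLin]
      exact (Matrix.toEuclideanCLM (𝕜 := ℂ) B).le_opNorm x
    have hrle : r ≤ ‖TA u‖ := by
      rw [hnormTAu, ← div_eq_inv_mul, le_div_iff₀ hyn]
      calc r * ‖y‖ ≤ r * (opNorm B * ‖x‖) := mul_le_mul_of_nonneg_left hbound hr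
        _ = (opNorm B * r) * ‖x‖ := by ring
        _ ≤ 1 * ‖x‖ := mul_le_mul_of_nonneg_right hgain.le (norm_nonneg x)
        _ = ‖x‖ := one_mul _
    have hzA : (inner ℂ u (TA u) : ℂ)
        = -(((‖y‖⁻¹ : ℝ) : ℂ)^2 * (starRingEnd ℂ) (inner ℂ x y)) := by
      rw [hTAu, hu, inner_smul_left, inner_smul_right]
      rw [inner_neg_right, ← inner_conj_symm x y]
      simp [Complex.conj_ofReal]
      ring
    obtain ⟨ρ₁, θ, hρ₁, hθ1, hθ2, hzθ⟩ :=
      hA _ (show _ ∈ wShell A r from ⟨u, hun, hrle, rfl⟩)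
    -- derive the contradiction
    set w : ℂ := inner ℂ x y with hw
    have h1 : -(((‖y‖⁻¹ : ℝ) : ℂ)^2 * (starRingEnd ℂ) w)
        = (ρ₁ : ℂ) * Complex.exp ((θ : ℂ) * Complex.I) := hzA.symm.trans hzθ
    have hwφ' : ((‖x‖⁻¹ : ℝ) : ℂ)^2 * w = (ρ₂ : ℂ) * Complex.exp ((φ : ℂ) * Complex.I) :=
      hzB.symm.trans hwφ
    have h2 : (starRingEnd ℂ) w
        = ((‖x‖ : ℝ) : ℂ)^2 * ρ₂ * Complex.exp (-((φ : ℂ) * Complex.I)) := by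
      have hc := congrArg (starRingEnd ℂ) hwφ'
      simp only [map_mul, map_pow, Complex.conj_ofReal, ← Complex.exp_conj, map_neg,
        Complex.conj_I, mul_neg] at hc
      have hxne : ((‖x‖ : ℝ) : ℂ) ≠ 0 := by
        simpa using hxn.ne'
      field_simp at hc
      rw [mul_assoc, ← hc]
      push_cast
      field_simp
    set k : ℝ := ‖y‖⁻¹^2 * ‖x‖^2 * ρ₂ with hk
    have hkpos : 0 < k := by positivity
    have hexp : Complex.exp (-((φ:ℂ) * Complex.I)) * Complex.exp ((φ:ℂ) * Complex.I) = 1 := by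
      rw [← Complex.exp_add, neg_add_cancel, Complex.exp_zero]
    have heq : (ρ₁ : ℂ) * Complex.exp (((θ + φ : ℝ) : ℂ) * Complex.I) = -(k : ℂ) := by
      have hsplit : (ρ₁ : ℂ) * Complex.exp (((θ + φ : ℝ) : ℂ) * Complex.I)
          = ((ρ₁ : ℂ) * Complex.exp ((θ : ℂ) * Complex.I)) * Complex.exp ((φ : ℂ) * Complex.I) := by
        push_cast
        rw [mul_assoc, ← Complex.exp_add]
        ring_nf
      rw [hsplit, ← h1, h2]
      rw [show -(((‖y‖⁻¹:ℝ):ℂ)^2 * (((‖x‖:ℝ):ℂ)^2 * ρ₂ * Complex.exp (-((φ:ℂ) * Complex.I))))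
            * Complex.exp ((φ:ℂ) * Complex.I)
          = -(((‖y‖⁻¹:ℝ):ℂ)^2 * ((‖x‖:ℝ):ℂ)^2 * ρ₂)
            * (Complex.exp (-((φ:ℂ) * Complex.I)) * Complex.exp ((φ:ℂ) * Complex.I)) by ring]
      rw [hexp, hk]
      push_cast
      ring
    have him := congrArg Complex.im heq
    simp only [Complex.mul_im, Complex.ofReal_re, Complex.ofReal_im,
      Complex.exp_ofReal_mul_I_im, Complex.exp_ofReal_mul_I_re, Complex.neg_im,
      zero_mul, add_zero, neg_zero] at him
    have hsin : Real.sin (θ + φ) = 0 :=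
      (mul_eq_zero.mp him).resolve_left hρ₁.ne'
    have hsum0 : θ + φ = 0 := by
      apply (Real.sin_eq_zero_iff_of_lt_of_lt ?_ ?_).mp hsin
      · linarith
      · linarith
    have hre := congrArg Complex.re heq
    simp only [Complex.mul_re, Complex.ofReal_re, Complex.ofReal_im,
      Complex.exp_ofReal_mul_I_im, Complex.exp_ofReal_mul_I_re, Complex.neg_re,
      zero_mul, sub_zero, hsum0, Real.cos_zero, mul_one] at hre
    linarith
  intro vv ww hvw
  have h0 : Matrix.toEuclideanLin (1 + A * B) ((WithLp.equiv 2 _).symm (vv - ww)) = 0 := by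
    rw [Matrix.toEuclideanLin_apply]
    have : (WithLp.equiv 2 (Fin n → ℂ)) ((WithLp.equiv 2 (Fin n → ℂ)).symm (vv - ww))
        = vv - ww := (WithLp.equiv 2 _).apply_symm_apply _
    rw [show ((WithLp.equiv 2 _).symm (vv - ww)).ofLp = vv - ww from rfl, Matrix.mulVec_sub, hvw, sub_self]
    rfl
  have := key _ h0
  have h2 := congrArg (WithLp.equiv 2 (Fin n → ℂ)) this
  rw [(WithLp.equiv 2 _).apply_symm_apply] at h2
  have : vv - ww = 0 := by simpa using h2
  exact sub_eq_zero.mp this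
end
end

section
/- Let n ≥ 1 and A, B ∈ ℂ^{n×n}, with A and B both sectorial (0 ∉ W(A) and 0 ∉ W(B)). Suppose there exists θ ∈ [0, π) such that: (i) for every unit vector x ∈ ℂⁿ for which ⟨x, A x⟩ cannot be written as ρ·e^{iφ} with ρ > 0 and φ ∈ (−θ, θ), one has ‖A x‖ · ‖B‖ < 1; and (ii) there exist real numbers c ≤ d with d − c < π, −π + θ < c, and d < π − θ such that W(B) lies in the angular sector [c, d]. Then the matrix I + A·B is invertible. -/
open scoped ComplexOrder Matrix

noncomputable section

set_option maxHeartbeats 1000000 in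
/-- Paper's Theorem 5: mixed constrained-gain / phase invertibility via the
Davis–Wielandt shell. -/
theorem dw_constrained_gain_invertible {n : ℕ} (hn : 1 ≤ n)
    (A B : Matrix (Fin n) (Fin n) ℂ)
    (hAsect : (0 : ℂ) ∉ numRange A) (hBsect : (0 : ℂ) ∉ numRange B)
    (θ : ℝ) (hθ0 : 0 ≤ θ) (hθ : θ < Real.pi)
    (hgain : ∀ x : EuclideanSpace ℂ (Fin n), ‖x‖ = 1 →
      (¬ ∃ ρ φ : ℝ, 0 < ρ ∧ -θ < φ ∧ φ < θ ∧
          (inner ℂ x (Matrix.toEuclideanLin A x) : ℂ) = ρ * Complex.exp (φ * Complex.I)) →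
      ‖Matrix.toEuclideanLin A x‖ * opNorm B < 1)
    (hphase : ∃ c d : ℝ, c ≤ d ∧ d - c < Real.pi ∧ -Real.pi + θ < c ∧ d < Real.pi - θ ∧
      inSector c d (numRange B)) :
    IsUnit (1 + A * B) := by
  by_contra hU
  rw [Matrix.isUnit_iff_isUnit_det, isUnit_iff_ne_zero, not_not] at hU
  obtain ⟨v, hv0, hv⟩ := Matrix.exists_mulVec_eq_zero_iff.mpr hU
  have hmv : A *ᵥ (B *ᵥ v) = -v := by
    rw [Matrix.add_mulVec, Matrix.one_mulVec, ← Matrix.mulVec_mulVec] at hv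
    linear_combination (norm := module) hv
  set LA := Matrix.toEuclideanLin A with hLA
  set LB := Matrix.toEuclideanLin B with hLB
  set x' : EuclideanSpace ℂ (Fin n) := (WithLp.equiv 2 (Fin n → ℂ)).symm v with hx'
  have hx'0 : x' ≠ 0 := by
    intro h
    apply hv0
    simpa [hx'] using congrArg (WithLp.equiv 2 (Fin n → ℂ)) h
  have hABx' : LA (LB x') = -x' := by
    rw [hLB, hLA, hx', WithLp.equiv_symm_apply, Matrix.toEuclideanLin_apply_piLp_toLp,
      Matrix.toEuclideanLin_apply_piLp_toLp, hmv]
    rfl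
  have hr : (0:ℝ) < ‖x'‖ := norm_pos_iff.mpr hx'0
  set x : EuclideanSpace ℂ (Fin n) := ((‖x'‖ : ℂ))⁻¹ • x' with hx
  have hx1 : ‖x‖ = 1 := by
    rw [hx, norm_smul, norm_inv, Complex.norm_real, Real.norm_eq_abs, abs_of_pos hr,
      inv_mul_cancel₀ hr.ne']
  set y := LB x with hy
  have hABx : LA y = -x := by
    rw [hy, hx, map_smul, map_smul, hABx', smul_neg]
  have hy0 : y ≠ 0 := by
    intro h
    exact hBsect ⟨x, hx1, by rw [← hLB, ← hy, h, inner_zero_right]⟩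
  have hyn : (0:ℝ) < ‖y‖ := norm_pos_iff.mpr hy0
  set z : ℂ := inner ℂ x y with hz
  obtain ⟨c, d, hcd, hdc, hc, hd, hsec⟩ := hphase
  obtain ⟨ρ', ψ, hρ', hcψ, hψd, hzeq⟩ := hsec z ⟨x, hx1, rfl⟩
  set u : EuclideanSpace ℂ (Fin n) := ((‖y‖ : ℂ))⁻¹ • y with hu
  have hu1 : ‖u‖ = 1 := by
    rw [hu, norm_smul, norm_inv, Complex.norm_real, Real.norm_eq_abs, abs_of_pos hyn,
      inv_mul_cancel₀ hyn.ne']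
  have hLAu : LA u = ((‖y‖:ℂ))⁻¹ • (-x) := by rw [hu, map_smul, hABx]
  have hinner : (inner ℂ u (LA u) : ℂ)
      = -(((‖y‖:ℝ)⁻¹^2 : ℝ) * (starRingEnd ℂ) z) := by
    have hyx : (inner ℂ y x : ℂ) = (starRingEnd ℂ) z := by
      rw [hz, inner_conj_symm]
    rw [hLAu, hu, inner_smul_left, inner_smul_right, inner_neg_right, hyx, map_inv₀,
      Complex.conj_ofReal]
    push_cast
    ring
  have hπ := Real.pi_pos
  have hnot : ¬ ∃ ρ φ : ℝ, 0 < ρ ∧ -θ < φ ∧ φ < θ ∧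
      (inner ℂ u (LA u) : ℂ) = ρ * Complex.exp (φ * Complex.I) := by
    rintro ⟨ρ, φ, hρ, hφ1, hφ2, heq⟩
    rw [hinner, hzeq] at heq
    set b : ℝ := (‖y‖:ℝ)⁻¹^2 * ρ' with hb
    have hbpos : 0 < b := by positivity
    have key : (ρ:ℂ) * Complex.exp (φ * Complex.I)
        = (b:ℂ) * Complex.exp ((Real.pi - ψ : ℝ) * Complex.I) := by
      rw [← heq]
      have h1 : ((Real.pi - ψ : ℝ) : ℂ) * Complex.I
          = Real.pi * Complex.I + ((-ψ : ℝ) : ℂ) * Complex.I := by push_cast; ring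
      rw [h1, Complex.exp_add, Complex.exp_pi_mul_I]
      rw [map_mul, Complex.conj_ofReal, ← Complex.exp_conj]
      have h2 : (starRingEnd ℂ) ((ψ:ℝ) * Complex.I) = ((-ψ : ℝ) : ℂ) * Complex.I := by
        simp [Complex.conj_I]
      rw [h2, hb]
      push_cast
      ring
    have habs : ρ = b := by
      have h := congrArg (‖·‖) key
      simp only [norm_mul, Complex.norm_exp_ofReal_mul_I, Complex.norm_real, Real.norm_eq_abs, mul_one] at h
      rwa [abs_of_pos hρ, abs_of_pos hbpos] at h
    have hexp : Complex.exp ((φ:ℝ) * Complex.I)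
        = Complex.exp ((Real.pi - ψ : ℝ) * Complex.I) := by
      rw [habs] at key
      exact mul_left_cancel₀ (by exact_mod_cast hbpos.ne') key
    obtain ⟨k, hk⟩ := Complex.exp_eq_exp_iff_exists_int.mp hexp
    have him : φ = (Real.pi - ψ) + k * (2 * Real.pi) := by
      have h := congrArg Complex.im hk
      push_cast at h
      simp [Complex.add_im, Complex.mul_im, Complex.sub_im] at h
      linarith [h]
    have hk0 : (k:ℝ) < 0 := by nlinarith
    have hk1 : k ≤ -1 := by
      have : k < 0 := by exact_mod_cast hk0
      omega
    have hk1' : (k:ℝ) ≤ -1 := by exact_mod_cast hk1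
    nlinarith
  have hlt := hgain u hu1 hnot
  have hnormAu : ‖LA u‖ = ‖y‖⁻¹ := by
    rw [hLAu, norm_smul, norm_neg, hx1, norm_inv, Complex.norm_real, Real.norm_eq_abs,
      abs_of_pos hyn, mul_one]
  have hyB : ‖y‖ ≤ opNorm B := by
    have h := (Matrix.toEuclideanCLM (𝕜 := ℂ) B).le_opNorm x
    rw [show (Matrix.toEuclideanCLM (𝕜 := ℂ) B) x = LB x from
      LinearMap.congr_fun (Matrix.coe_toEuclideanCLM_eq_toEuclideanLin B) x, hx1,
      mul_one] at h
    exact h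
  have : (1:ℝ) ≤ ‖LA u‖ * opNorm B := by
    rw [hnormAu, ← inv_mul_cancel₀ hyn.ne']
    exact mul_le_mul_of_nonneg_left hyB (by positivity)
  linarith
end
end
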